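/- arXiv:1705.07110 — 5 statements merged into one kernel-verified Lean document; each statement's English description precedes it below -/
import Mathlib

section
/- Let K/F be a Galois extension of number fields whose Galois group G is cyclic of order n with generator σ, and assume every nonzero prime ideal of O_F is unramified in O_K (i.e. every prime of O_K above it has ramification index 1). Suppose γ ∈ K^× satisfies σ(γ)/γ ∈ (K^×)^n. Then there exists a fractional ideal I of O_F such that the principal fractional ideal of O_F generated by Norm_{K/F}(γ) equals I^n. -/
open NumberField IsDedekindDomain

section Aux

open UniqueFactorizationMonoid IsDedekindDomain


theorem aux_count_map {R S : Type*} [CommRing R] [IsDedekindDomain R] [CommRing S]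
    [IsDedekindDomain S] [Algebra R S]
    [DecidableEq (Ideal R)] [DecidableEq (Ideal S)]
    (hinj : Function.Injective (algebraMap R S))
    (w : Ideal S) (hwp : w.IsPrime) (hw0 : w ≠ ⊥)
    (he : ∀ q : Ideal R, q ≠ ⊥ → q.IsPrime →
      Ideal.comap (algebraMap R S) w = q → Ideal.ramificationIdx' q w = 1)
    (J : Ideal R) (hJ : J ≠ 0) :
    Multiset.count w (normalizedFactors (J.map (algebraMap R S))) =
      Multiset.count (Ideal.comap (algebraMap R S) w) (normalizedFactors J) := by
  have hprime : ∀ q : Ideal R, Prime q →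
      Multiset.count w (normalizedFactors (q.map (algebraMap R S))) =
        Multiset.count (Ideal.comap (algebraMap R S) w) (normalizedFactors q) := by
    intro q hq
    have hq0 : q ≠ ⊥ := hq.ne_zero
    have hqp : q.IsPrime := Ideal.isPrime_of_prime hq
    have hmq : q.map (algebraMap R S) ≠ ⊥ := by
      rw [Ne, Ideal.map_eq_bot_iff_of_injective hinj]; exact hq0
    have hnfq : normalizedFactors q = {q} := by
      rw [normalizedFactors_irreducible hq.irreducible, normalize_eq]
    by_cases hcw : Ideal.comap (algebraMap R S) w = q
    · rw [hnfq, hcw, Multiset.count_singleton, if_pos rfl]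
      convert (Ideal.IsDedekindDomain.ramificationIdx'_eq_normalizedFactors_count hmq hwp hw0).symm.trans (he q hq0 hqp hcw)
    · rw [hnfq, Multiset.count_singleton, if_neg hcw]
      rw [Multiset.count_eq_zero]
      intro hmem
      have hdvd : w ∣ q.map (algebraMap R S) := dvd_of_mem_normalizedFactors hmem
      have hle : q ≤ Ideal.comap (algebraMap R S) w :=
        Ideal.map_le_iff_le_comap.mp (Ideal.le_of_dvd hdvd)
      have hqmax : q.IsMaximal := hqp.isMaximal hq0
      exact hcw ((hqmax.eq_of_le (Ideal.comap_ne_top _ hwp.ne_top) hle).symm)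
  revert hJ
  induction J using UniqueFactorizationMonoid.induction_on_prime with
  | h₁ => exact fun h => absurd rfl h
  | h₂ J hJu =>
      intro _
      have h1 : J = 1 := by rw [Ideal.one_eq_top, Ideal.isUnit_iff.mp hJu]
      rw [h1, Ideal.one_eq_top, Ideal.map_top, ← Ideal.one_eq_top, normalizedFactors_one]
      rw [← Ideal.one_eq_top, normalizedFactors_one]
      simp
  | h₃ J q hJ' hq ih =>
      intro _
      have hq0 : q ≠ 0 := hq.ne_zero
      have hmq : q.map (algebraMap R S) ≠ 0 := by
        simp only [Ne, Submodule.zero_eq_bot, Ideal.map_eq_bot_iff_of_injective hinj]; exact hq0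
      have hmJ : J.map (algebraMap R S) ≠ 0 := by
        simp only [Ne, Submodule.zero_eq_bot, Ideal.map_eq_bot_iff_of_injective hinj]; exact hJ'
      rw [Ideal.map_mul, normalizedFactors_mul hmq hmJ, normalizedFactors_mul hq0 hJ',
        Multiset.count_add, Multiset.count_add, hprime q hq, ih hJ']



theorem norm_nth_power (F K : Type) [Field F] [NumberField F] [Field K] [NumberField K]
    [Algebra F K] [IsGalois F K]
    (n : ℕ) (σ : K ≃ₐ[F] K)
    (hσgen : ∀ τ : K ≃ₐ[F] K, τ ∈ Subgroup.zpowers σ)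
    (hcard : Nat.card (K ≃ₐ[F] K) = n)
    (γ : K) (hγ : γ ≠ 0)
    (hfix : ∃ k : K, k ≠ 0 ∧ σ γ / γ = k ^ n) :
    ∃ β : K, β ≠ 0 ∧ algebraMap F K (Algebra.norm F γ) = β ^ n := by
  have hFD : FiniteDimensional F K := Module.Finite.of_restrictScalars_finite ℚ F K
  obtain ⟨k, hk0, hk⟩ := hfix
  have hσγ : σ γ = γ * k ^ n := by
    field_simp at hk
    rw [hk]
  set c : ℕ → K := fun i => ∏ j ∈ Finset.range i, (σ ^ j) k with hc
  have hpow : ∀ i : ℕ, (σ ^ i) γ = γ * (c i) ^ n := by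
    intro i
    induction i with
    | zero => simp [hc]
    | succ i ih =>
        rw [pow_succ, AlgEquiv.mul_apply, hσγ, map_mul, map_pow, ih, hc]
        simp only [Finset.prod_range_succ, mul_pow]
        ring
  have hcard' : Fintype.card (K ≃ₐ[F] K) = n := by
    rw [← Nat.card_eq_fintype_card, hcard]
  have horder : orderOf σ = n := by
    rw [← hcard]; exact orderOf_eq_card_of_forall_mem_zpowers hσgen
  have hbij : Function.Bijective (fun i : Fin n => σ ^ (i : ℕ)) := by
    rw [Fintype.bijective_iff_injective_and_card]
    constructor
    · intro i j hij
      have := pow_injOn_Iio_orderOf (x := σ) (by rw [horder]; exact i.2) (by rw [horder]; exact j.2) hij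
      exact Fin.ext this
    · simp [hcard']
  have hnorm : algebraMap F K (Algebra.norm F γ) = ∏ i : Fin n, (σ ^ (i : ℕ)) γ := by
    rw [Algebra.norm_eq_prod_automorphisms]
    exact (Fintype.prod_bijective _ hbij _ _ (fun i => rfl)).symm
  refine ⟨γ * ∏ i : Fin n, c i, ?_, ?_⟩
  · refine mul_ne_zero hγ (Finset.prod_ne_zero_iff.mpr fun i _ => ?_)
    exact Finset.prod_ne_zero_iff.mpr fun j _ => by
      simpa using (map_ne_zero_iff _ (σ ^ j).injective).mpr hk0
  · rw [hnorm]
    calc ∏ i : Fin n, (σ ^ (i : ℕ)) γ = ∏ i : Fin n, (γ * (c i) ^ n) := by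
          refine Finset.prod_congr rfl fun i _ => hpow i
      _ = γ ^ n * (∏ i : Fin n, c i) ^ n := by
          rw [Finset.prod_mul_distrib, Finset.prod_const, Finset.prod_pow, Finset.card_univ,
            Fintype.card_fin]
      _ = (γ * ∏ i : Fin n, c i) ^ n := by rw [mul_pow]


theorem count_comparison (F K : Type) [Field F] [NumberField F] [Field K] [NumberField K]
    [Algebra F K]
    (hunram : ∀ (p : Ideal (𝓞 F)) (P : Ideal (𝓞 K)), p ≠ ⊥ → p.IsPrime → P.IsPrime →
      Ideal.comap (algebraMap (𝓞 F) (𝓞 K)) P = p →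
      Ideal.ramificationIdx' p P = 1)
    (x : F) (hx : x ≠ 0) (v : HeightOneSpectrum (𝓞 F)) :
    ∃ w : HeightOneSpectrum (𝓞 K),
      FractionalIdeal.count K w
          (FractionalIdeal.spanSingleton (nonZeroDivisors (𝓞 K)) (algebraMap F K x)) =
        FractionalIdeal.count F v (FractionalIdeal.spanSingleton (nonZeroDivisors (𝓞 F)) x) := by
  classical
  set f := algebraMap (𝓞 F) (𝓞 K) with hf
  have hinjRK : Function.Injective (algebraMap (𝓞 F) K) := by
    rw [IsScalarTower.algebraMap_eq (𝓞 F) F K]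
    exact (algebraMap F K).injective.comp (IsFractionRing.injective (𝓞 F) F)
  have hinj : Function.Injective f := by
    intro a b h
    apply hinjRK
    rw [IsScalarTower.algebraMap_apply (𝓞 F) (𝓞 K) K, h,
      ← IsScalarTower.algebraMap_apply (𝓞 F) (𝓞 K) K]
  -- choose a prime above v
  haveI := v.isPrime
  obtain ⟨W, hWp, hWc⟩ := Ideal.exists_ideal_over_prime_of_isIntegral_of_isDomain v.asIdeal
    (by rw [(RingHom.injective_iff_ker_eq_bot _).mp hinj]; exact bot_le)
  have hW0 : W ≠ ⊥ := by
    intro h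
    exact v.ne_bot (by rw [← hWc, h, Ideal.comap_bot_of_injective _ hinj])
  refine ⟨⟨W, hWp, hW0⟩, ?_⟩
  -- write x = a / d
  obtain ⟨⟨a, d⟩, hxad : IsLocalization.mk' F a d = x⟩ := IsLocalization.mk'_surjective (nonZeroDivisors (𝓞 F)) x
  have ha0 : a ≠ 0 := by
    intro h
    rw [← hxad, h, IsLocalization.mk'_zero] at hx
    exact hx rfl
  have hd0 : (d : 𝓞 F) ≠ 0 := nonZeroDivisors.coe_ne_zero d
  have hspa : (Ideal.span {a} : Ideal (𝓞 F)) ≠ 0 := by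
    simpa [Ideal.span_singleton_eq_bot] using ha0
  have hspd : (Ideal.span {(d : 𝓞 F)} : Ideal (𝓞 F)) ≠ 0 := by
    simpa [Ideal.span_singleton_eq_bot] using hd0
  have hIF0 : FractionalIdeal.spanSingleton (nonZeroDivisors (𝓞 F)) x ≠ 0 :=
    FractionalIdeal.spanSingleton_ne_zero_iff.mpr hx
  have hIF : FractionalIdeal.spanSingleton (nonZeroDivisors (𝓞 F)) x =
      FractionalIdeal.spanSingleton (nonZeroDivisors (𝓞 F))
        ((algebraMap (𝓞 F) F) (d : 𝓞 F))⁻¹ * ↑(Ideal.span {a} : Ideal (𝓞 F)) := by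
    rw [FractionalIdeal.coeIdeal_span_singleton,
      FractionalIdeal.spanSingleton_mul_spanSingleton]
    congr 1
    rw [← hxad, IsFractionRing.mk'_eq_div, div_eq_mul_inv, mul_comm]
  have hcF := FractionalIdeal.count_well_defined F v hIF0 hIF
  -- K side
  have hx' : algebraMap F K x ≠ 0 := by
    simpa using (map_ne_zero_iff _ (algebraMap F K).injective).mpr hx
  have hIK0 : FractionalIdeal.spanSingleton (nonZeroDivisors (𝓞 K)) (algebraMap F K x) ≠ 0 :=
    FractionalIdeal.spanSingleton_ne_zero_iff.mpr hx'
  have hxfad : algebraMap F K x = algebraMap (𝓞 K) K (f a) / algebraMap (𝓞 K) K (f d) := by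
    rw [← hxad, IsFractionRing.mk'_eq_div, map_div₀,
      ← IsScalarTower.algebraMap_apply (𝓞 F) F K, ← IsScalarTower.algebraMap_apply (𝓞 F) F K,
      IsScalarTower.algebraMap_apply (𝓞 F) (𝓞 K) K,
      IsScalarTower.algebraMap_apply (𝓞 F) (𝓞 K) K ((d : 𝓞 F))]
  have hIK : FractionalIdeal.spanSingleton (nonZeroDivisors (𝓞 K)) (algebraMap F K x) =
      FractionalIdeal.spanSingleton (nonZeroDivisors (𝓞 K))
        ((algebraMap (𝓞 K) K) (f (d : 𝓞 F)))⁻¹ * ↑(Ideal.span {f a} : Ideal (𝓞 K)) := by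
    rw [FractionalIdeal.coeIdeal_span_singleton,
      FractionalIdeal.spanSingleton_mul_spanSingleton]
    rw [hxfad, div_eq_mul_inv, mul_comm]
  have hcK := FractionalIdeal.count_well_defined K (⟨W, hWp, hW0⟩ : HeightOneSpectrum (𝓞 K))
    hIK0 hIK
  rw [hcF, hcK]
  -- now compare the Associates counts
  have hmap_a : (Ideal.span {f a} : Ideal (𝓞 K)) = (Ideal.span {a}).map f := by
    rw [Ideal.map_span, Set.image_singleton]
  have hmap_d : (Ideal.span {f (d : 𝓞 F)} : Ideal (𝓞 K)) = (Ideal.span {(d : 𝓞 F)}).map f := by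
    rw [Ideal.map_span, Set.image_singleton]
  have hmapa0 : (Ideal.span {a} : Ideal (𝓞 F)).map f ≠ 0 := by
    simp only [Ne, Submodule.zero_eq_bot, Ideal.map_eq_bot_iff_of_injective hinj]
    exact hspa
  have hmapd0 : (Ideal.span {(d : 𝓞 F)} : Ideal (𝓞 F)).map f ≠ 0 := by
    simp only [Ne, Submodule.zero_eq_bot, Ideal.map_eq_bot_iff_of_injective hinj]
    exact hspd
  have he : ∀ q : Ideal (𝓞 F), q ≠ ⊥ → q.IsPrime →
      Ideal.comap f W = q → Ideal.ramificationIdx' q W = 1 :=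
    fun q hq0 hqp hc => hunram q W hq0 hqp hWp hc
  have key : ∀ J : Ideal (𝓞 F), J ≠ 0 →
      (Associates.mk (⟨W, hWp, hW0⟩ : HeightOneSpectrum (𝓞 K)).asIdeal).count
          (Associates.mk (J.map f)).factors =
        (Associates.mk v.asIdeal).count (Associates.mk J).factors := by
    intro J hJ
    have hmapJ0 : J.map f ≠ 0 := by
      simp only [Ne, Submodule.zero_eq_bot, Ideal.map_eq_bot_iff_of_injective hinj]
      exact hJ
    rw [count_associates_factors_eq hmapJ0 hWp hW0,
      count_associates_factors_eq hJ v.isPrime v.ne_bot,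
      aux_count_map hinj W hWp hW0 he J hJ, hWc]
  rw [hmap_a, hmap_d, key _ hspa, key _ hspd]


end Aux

theorem norm_of_sigma_fixed_mod_nth_powers_is_nth_power_ideal
    (F K : Type) [Field F] [NumberField F] [Field K] [NumberField K]
    [Algebra F K] [IsGalois F K]
    (n : ℕ)
    (σ : K ≃ₐ[F] K)
    (hσgen : ∀ τ : K ≃ₐ[F] K, τ ∈ Subgroup.zpowers σ)
    (hcard : Nat.card (K ≃ₐ[F] K) = n)
    (hunram : ∀ (p : Ideal (𝓞 F)) (P : Ideal (𝓞 K)), p ≠ ⊥ → p.IsPrime → P.IsPrime →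
      Ideal.comap (algebraMap (𝓞 F) (𝓞 K)) P = p →
      Ideal.ramificationIdx' p P = 1)
    (γ : K) (hγ : γ ≠ 0)
    (hfix : ∃ k : K, k ≠ 0 ∧ σ γ / γ = k ^ n) :
    ∃ I : FractionalIdeal (nonZeroDivisors (𝓞 F)) F,
      FractionalIdeal.spanSingleton (nonZeroDivisors (𝓞 F)) (Algebra.norm F γ) = I ^ n := by
  classical
  have hFD : FiniteDimensional F K := Module.Finite.of_restrictScalars_finite ℚ F K
  have hn0 : n ≠ 0 := by
    rw [← hcard]
    exact Nat.card_pos.ne'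
  set x := Algebra.norm F γ with hxdef
  have hx : x ≠ 0 := Algebra.norm_ne_zero_iff.mpr hγ
  set IF := FractionalIdeal.spanSingleton (nonZeroDivisors (𝓞 F)) x with hIFdef
  have hIF0 : IF ≠ 0 := FractionalIdeal.spanSingleton_ne_zero_iff.mpr hx
  obtain ⟨β, hβ0, hβ⟩ := norm_nth_power F K n σ hσgen hcard γ hγ hfix
  -- divisibility of all counts
  have hdvd : ∀ v : HeightOneSpectrum (𝓞 F), (n : ℤ) ∣ FractionalIdeal.count F v IF := by
    intro v
    obtain ⟨w, hw⟩ := count_comparison F K hunram x hx v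
    rw [← hw, hβ, ← FractionalIdeal.spanSingleton_pow, FractionalIdeal.count_pow]
    exact Dvd.intro _ rfl
  set exps : HeightOneSpectrum (𝓞 F) → ℤ := fun v => FractionalIdeal.count F v IF / n
    with hexps
  have hfin : (Function.mulSupport fun v : HeightOneSpectrum (𝓞 F) =>
      (v.asIdeal : FractionalIdeal (nonZeroDivisors (𝓞 F)) F) ^ exps v).Finite := by
    apply Set.Finite.subset (FractionalIdeal.finite_factors IF)
    intro v hv
    simp only [Function.mem_mulSupport] at hv
    simp only [Set.mem_setOf_eq]
    intro hc
    apply hv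
    have h0 : exps v = 0 := by
      rw [hexps]
      simp only []
      rw [show FractionalIdeal.count F v IF = 0 from hc]
      simp
    rw [h0, zpow_zero]
  refine ⟨∏ᶠ v : HeightOneSpectrum (𝓞 F),
    (v.asIdeal : FractionalIdeal (nonZeroDivisors (𝓞 F)) F) ^ exps v, ?_⟩
  rw [finprod_pow hfin]
  have : ∀ v : HeightOneSpectrum (𝓞 F),
      ((v.asIdeal : FractionalIdeal (nonZeroDivisors (𝓞 F)) F) ^ exps v) ^ n =
        (v.asIdeal : FractionalIdeal (nonZeroDivisors (𝓞 F)) F) ^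
          (FractionalIdeal.count F v IF) := by
    intro v
    rw [← zpow_natCast _ n, ← zpow_mul]
    congr 1
    rw [hexps]
    exact Int.ediv_mul_cancel (hdvd v)
  rw [finprod_congr this, FractionalIdeal.finprod_heightOneSpectrum_factorization' F hIF0]
end

section
/- Let K/F be a Galois extension of number fields whose Galois group G is cyclic of order n with generator σ, and assume every nonzero prime ideal of O_F is unramified in O_K. Suppose γ, γ' ∈ K^× satisfy σ(γ)/γ ∈ (K^×)^n and σ(γ')/γ' ∈ (K^×)^n, and that γ' = γ·f·k^n for some f ∈ F^× and k ∈ K^×. If I and I' are fractional ideals of O_F with Norm_{K/F}(γ)·O_F = I^n and Norm_{K/F}(γ')·O_F = I'^n, then the ideal classes of I and I' in the ideal class group Cl(O_F) are equal, and this common class is n-torsion: [I]^n is the trivial class. -/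
open NumberField

open IsDedekindDomain in
lemma my_pow_inj {R K : Type*} [CommRing R] [IsDedekindDomain R]
    [Field K] [Algebra R K] [IsFractionRing R K] {n : ℕ} (hn : n ≠ 0)
    {A B : FractionalIdeal (nonZeroDivisors R) K} (hA : A ≠ 0) (hB : B ≠ 0)
    (h : A ^ n = B ^ n) : A = B := by
  rw [← FractionalIdeal.finprod_heightOneSpectrum_factorization' (K := K) hA,
      ← FractionalIdeal.finprod_heightOneSpectrum_factorization' (K := K) hB]
  apply finprod_congr
  intro v
  congr 1
  have hc := congrArg (FractionalIdeal.count K v) h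
  rw [FractionalIdeal.count_pow, FractionalIdeal.count_pow] at hc
  exact mul_left_cancel₀ (by exact_mod_cast hn) hc

theorem class_of_nth_root_ideal_well_defined_and_torsion
    (F K : Type) [Field F] [NumberField F] [Field K] [NumberField K]
    [Algebra F K] [IsGalois F K]
    (n : ℕ)
    (σ : K ≃ₐ[F] K)
    (hσgen : ∀ τ : K ≃ₐ[F] K, τ ∈ Subgroup.zpowers σ)
    (hcard : Nat.card (K ≃ₐ[F] K) = n)
    (hunram : ∀ (p : Ideal (𝓞 F)) (P : Ideal (𝓞 K)), p ≠ ⊥ → p.IsPrime → P.IsPrime →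
      Ideal.comap (algebraMap (𝓞 F) (𝓞 K)) P = p →
      Ideal.ramificationIdx' p P = 1)
    (γ γ' : K) (hγ : γ ≠ 0) (hγ' : γ' ≠ 0)
    (hfix : ∃ k : K, k ≠ 0 ∧ σ γ / γ = k ^ n)
    (hfix' : ∃ k : K, k ≠ 0 ∧ σ γ' / γ' = k ^ n)
    (hrel : ∃ (f : F) (k : K), f ≠ 0 ∧ k ≠ 0 ∧ γ' = γ * algebraMap F K f * k ^ n)
    (I I' : (FractionalIdeal (nonZeroDivisors (𝓞 F)) F)ˣ)
    (hI : FractionalIdeal.spanSingleton (nonZeroDivisors (𝓞 F)) (Algebra.norm F γ)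
      = (I : FractionalIdeal (nonZeroDivisors (𝓞 F)) F) ^ n)
    (hI' : FractionalIdeal.spanSingleton (nonZeroDivisors (𝓞 F)) (Algebra.norm F γ')
      = (I' : FractionalIdeal (nonZeroDivisors (𝓞 F)) F) ^ n) :
    ClassGroup.mk F I = ClassGroup.mk F I' ∧ (ClassGroup.mk F I) ^ n = 1 := by
  obtain ⟨f, k, hf, hk, hγeq⟩ := hrel
  have hn : n ≠ 0 := by
    rw [← hcard]
    exact Nat.card_pos.ne'
  have hfinrank : Module.finrank F K = n := by
    rw [← hcard, IsGalois.card_aut_eq_finrank]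
  -- norm computation
  have hnk : Algebra.norm F k ≠ 0 := (Algebra.norm_ne_zero_iff).mpr hk
  set s : F := f * Algebra.norm F k with hs_def
  have hs : s ≠ 0 := mul_ne_zero hf hnk
  have hnorm : Algebra.norm F γ' = Algebra.norm F γ * s ^ n := by
    rw [hγeq, map_mul, map_mul, map_pow, Algebra.norm_algebraMap, hfinrank, hs_def,
      mul_pow, mul_assoc]
  -- the principal unit
  set U : (FractionalIdeal (nonZeroDivisors (𝓞 F)) F)ˣ :=
    toPrincipalIdeal (𝓞 F) F (Units.mk0 s hs) with hU_def
  have hUcoe : (U : FractionalIdeal (nonZeroDivisors (𝓞 F)) F)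
      = FractionalIdeal.spanSingleton (nonZeroDivisors (𝓞 F)) s :=
    coe_toPrincipalIdeal _
  have key : I' = I * U := by
    ext1
    refine my_pow_inj hn (Units.ne_zero _) (Units.ne_zero _) ?_
    rw [← hI', hnorm, ← FractionalIdeal.spanSingleton_mul_spanSingleton,
      ← FractionalIdeal.spanSingleton_pow, hI, Units.val_mul, hUcoe, mul_pow]
  have hmkU : ClassGroup.mk F U = 1 := by
    rw [ClassGroup.mk_eq_one_iff]
    exact ⟨⟨s, by rw [hUcoe, FractionalIdeal.coe_spanSingleton]⟩⟩
  constructor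
  · rw [key, map_mul, hmkU, mul_one]
  · rw [← map_pow, ClassGroup.mk_eq_one_iff]
    refine ⟨⟨Algebra.norm F γ, ?_⟩⟩
    rw [Units.val_pow_eq_pow_val, ← hI, FractionalIdeal.coe_spanSingleton]
end

section
/- Let n ≥ 1, let F be a number field containing a primitive n-th root of unity ζ, and let K/F be a Galois extension with Galois group cyclic of order n generated by σ. Suppose x ∈ K^× satisfies Norm_{K/F}(x) = ζ and y ∈ K^× satisfies σ(y)/y = x^n. Let β be an element of an algebraic closure of K with β^n = y. Then K(β) is a Galois extension of F of degree n² whose Galois group Gal(K(β)/F) is cyclic (of order n²). -/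
open NumberField

open IntermediateField Polynomial

/-- The fixed points of an algebra automorphism form an intermediate field. -/
def fixedIF (F Ω : Type) [Field F] [Field Ω] [Algebra F Ω] (g : Ω ≃ₐ[F] Ω) :
    IntermediateField F Ω where
  carrier := {z | g z = z}
  mul_mem' := by
    intro a b ha hb
    simp only [Set.mem_setOf_eq, map_mul] at *
    rw [ha, hb]
  one_mem' := map_one g
  add_mem' := by
    intro a b ha hb
    simp only [Set.mem_setOf_eq, map_add] at *
    rw [ha, hb]
  zero_mem' := map_zero g
  inv_mem' := by
    intro a ha
    simp only [Set.mem_setOf_eq, map_inv₀] at *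
    rw [ha]
  algebraMap_mem' := fun r => g.commutes r

theorem mem_fixedIF {F Ω : Type} [Field F] [Field Ω] [Algebra F Ω] {g : Ω ≃ₐ[F] Ω} {z : Ω} :
    z ∈ fixedIF F Ω g ↔ g z = z := ⟨fun h => h, fun h => h⟩

theorem kummer_generator_gives_cyclic_degree_n_sq_extension
    (F K : Type) [Field F] [NumberField F] [Field K] [NumberField K]
    [Algebra F K] [IsGalois F K]
    (n : ℕ) (hn : 1 ≤ n)
    (ζ : F) (hζ : IsPrimitiveRoot ζ n)
    (σ : K ≃ₐ[F] K)
    (hσgen : ∀ τ : K ≃ₐ[F] K, τ ∈ Subgroup.zpowers σ)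
    (hcard : Nat.card (K ≃ₐ[F] K) = n)
    (x : K) (hx0 : x ≠ 0) (hx : Algebra.norm F x = ζ)
    (y : K) (hy : y ≠ 0) (hxy : σ y / y = x ^ n)
    (Ω : Type) [Field Ω] [Algebra K Ω] [IsAlgClosure K Ω]
    [Algebra F Ω] [IsScalarTower F K Ω]
    (β : Ω) (hβ : β ^ n = algebraMap K Ω y) :
    IsGalois F (IntermediateField.adjoin F (Set.range (algebraMap K Ω) ∪ {β})) ∧
    Module.finrank F (IntermediateField.adjoin F (Set.range (algebraMap K Ω) ∪ {β})) = n ^ 2 ∧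
    IsCyclic ((IntermediateField.adjoin F (Set.range (algebraMap K Ω) ∪ {β})) ≃ₐ[F]
      (IntermediateField.adjoin F (Set.range (algebraMap K Ω) ∪ {β}))) := by
  classical
  haveI : FiniteDimensional F K := FiniteDimensional.right ℚ F K
  haveI : Algebra.IsAlgebraic F K := Algebra.IsAlgebraic.of_finite F K
  haveI : Algebra.IsAlgebraic F Ω := Algebra.IsAlgebraic.trans F K Ω
  haveI : IsAlgClosed Ω := IsAlgClosure.isAlgClosed K
  haveI : IsAlgClosure F Ω := ⟨IsAlgClosure.isAlgClosed K, inferInstance⟩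
  haveI : Normal F Ω := inferInstance
  have hn0 : 0 < n := hn
  haveI : NeZero n := ⟨hn0.ne'⟩
  set Ls : IntermediateField F Ω := adjoin F (Set.range (algebraMap K Ω) ∪ {β}) with hLs
  have hKmem : ∀ a : K, algebraMap K Ω a ∈ Ls := fun a => subset_adjoin F _ (Or.inl ⟨a, rfl⟩)
  have hβmem : β ∈ Ls := subset_adjoin F _ (Or.inr rfl)
  -- identify Ls with the restriction of scalars of `K(β)`
  have hLsE : Ls = restrictScalars F (adjoin K {β}) := by
    refine le_antisymm (adjoin_le_iff.2 ?_) ?_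
    · rintro z (⟨a, rfl⟩ | hz)
      · exact IntermediateField.algebraMap_mem (adjoin K {β}) a
      · exact subset_adjoin K {β} hz
    · intro z hz
      have hz' : z ∈ Subfield.closure (Set.range (algebraMap K Ω) ∪ {β}) := hz
      refine Subfield.closure_le.2 ?_ hz'
      rintro w (⟨a, rfl⟩ | hw)
      · exact subset_adjoin F _ (Or.inl ⟨a, rfl⟩)
      · exact subset_adjoin F _ (Or.inr hw)
  -- dimension bound
  have hfrk : Module.finrank F K = n := by
    have h := IsGalois.card_aut_eq_finrank F K
    rw [hcard] at h
    exact h.symm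
  have haev : (Polynomial.aeval β) (X ^ n - C y : K[X]) = 0 := by
    simp [map_sub, hβ]
  have hint : IsIntegral K β := ⟨X ^ n - C y, monic_X_pow_sub_C y hn0.ne', haev⟩
  have hdeg : (minpoly K β).natDegree ≤ n := by
    have h1 := minpoly.degree_le_of_ne_zero K β (X_pow_sub_C_ne_zero hn0 y) haev
    rwa [degree_X_pow_sub_C hn0, ← natDegree_le_iff_degree_le] at h1
  haveI : FiniteDimensional K (adjoin K {β}) := adjoin.finiteDimensional hint
  haveI hfd : FiniteDimensional F Ls := by
    rw [hLsE]; exact FiniteDimensional.trans F K ↥(adjoin K {β})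
  have hupper : Module.finrank F Ls ≤ n ^ 2 := by
    rw [hLsE]
    have h2 : Module.finrank K (adjoin K {β}) ≤ n := by
      rw [adjoin.finrank hint]; exact hdeg
    have h3 : Module.finrank F ↥(restrictScalars F (adjoin K {β}))
        = Module.finrank F K * Module.finrank K ↥(adjoin K {β}) :=
      (Module.finrank_mul_finrank F K ↥(adjoin K {β})).symm
    rw [h3, hfrk, pow_two]
    exact Nat.mul_le_mul_left n h2
  -- order of σ
  have hords : orderOf σ = n := by
    rw [orderOf_eq_card_of_forall_mem_zpowers hσgen, hcard]
  have hσn : σ ^ n = 1 := by rw [← hords]; exact pow_orderOf_eq_one σ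
  -- the lift of σ to Ω
  set φ : Ω ≃ₐ[F] Ω := σ.liftNormal Ω with hφdef
  have hφK : ∀ a : K, φ (algebraMap K Ω a) = algebraMap K Ω (σ a) :=
    fun a => AlgEquiv.liftNormal_commutes σ Ω a
  have hφKpow : ∀ (k : ℕ) (a : K),
      (φ ^ k) (algebraMap K Ω a) = algebraMap K Ω ((σ ^ k) a) := by
    intro k
    induction k with
    | zero => intro a; simp
    | succ k ih =>
      intro a
      rw [pow_succ, AlgEquiv.mul_apply, hφK, ih, pow_succ, AlgEquiv.mul_apply]
  -- roots of unity
  have hβ0 : β ≠ 0 := by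
    intro h
    apply hy
    have h1 : algebraMap K Ω y = 0 := by rw [← hβ, h, zero_pow hn0.ne']
    exact (_root_.map_eq_zero (algebraMap K Ω)).1 h1
  have hxΩ : algebraMap K Ω x ≠ 0 := by
    simpa using hx0
  have hζΩ : IsPrimitiveRoot (algebraMap F Ω ζ) n :=
    hζ.map_of_injective (algebraMap F Ω).injective
  have hζΩ0 : algebraMap F Ω ζ ≠ 0 := by
    intro h
    have := hζΩ.pow_eq_one
    rw [h, zero_pow hn0.ne'] at this
    exact zero_ne_one this
  have hσy : σ y = x ^ n * y := (div_eq_iff hy).1 hxy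
  have hw : (φ β / (algebraMap K Ω x * β)) ^ n = 1 := by
    have h1 : (φ β) ^ n = algebraMap K Ω x ^ n * β ^ n := by
      rw [← map_pow, hβ, hφK, hσy, map_mul, map_pow]
    rw [div_pow, mul_pow, h1]
    exact div_self (mul_ne_zero (pow_ne_zero n hxΩ) (pow_ne_zero n hβ0))
  obtain ⟨i, hi, hui⟩ := hζΩ.eq_pow_of_pow_eq_one hw
  set c : Ω := algebraMap F Ω ζ ^ i * algebraMap K Ω x with hc
  have hφβ : φ β = c * β := by
    have h1 : φ β = algebraMap F Ω ζ ^ i * (algebraMap K Ω x * β) :=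
      (div_eq_iff (mul_ne_zero hxΩ hβ0)).1 hui.symm
    rw [h1, hc, mul_assoc]
  have hcmem : c ∈ Ls := mul_mem (pow_mem (IntermediateField.algebraMap_mem Ls ζ) i) (hKmem x)
  have hc0 : c ≠ 0 := mul_ne_zero (pow_ne_zero i hζΩ0) hxΩ
  -- Ls is stable under φ
  have hmapsub : ∀ g : Ω ≃ₐ[F] Ω, (∀ a : K, g (algebraMap K Ω a) ∈ Ls) → g β ∈ Ls →
      Ls.map (g : Ω →ₐ[F] Ω) ≤ Ls := by
    intro g hg1 hg2
    rw [hLs, adjoin_map]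
    refine adjoin_le_iff.2 ?_
    rintro z ⟨w, hw, rfl⟩
    rcases hw with ⟨a, rfl⟩ | hw
    · exact hg1 a
    · cases hw
      exact hg2
  have hφsymmK : ∀ a : K, φ.symm (algebraMap K Ω a) = algebraMap K Ω (σ.symm a) := by
    intro a
    apply φ.injective
    rw [AlgEquiv.apply_symm_apply, hφK, AlgEquiv.apply_symm_apply]
  have hmapφ : Ls.map (φ : Ω →ₐ[F] Ω) = Ls := by
    refine le_antisymm
      (hmapsub φ (fun a => by rw [hφK]; exact hKmem _)
        (by rw [hφβ]; exact mul_mem hcmem hβmem)) ?_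
    have h2 : Ls.map (φ.symm : Ω →ₐ[F] Ω) ≤ Ls := by
      refine hmapsub φ.symm (fun a => by rw [hφsymmK]; exact hKmem _) ?_
      have hsymmβ : φ.symm β = (φ.symm c)⁻¹ * β := by
        apply φ.injective
        rw [map_mul, AlgEquiv.apply_symm_apply, map_inv₀, AlgEquiv.apply_symm_apply, hφβ,
          ← mul_assoc, inv_mul_cancel₀ hc0, one_mul]
      rw [hsymmβ]
      have hφsc : φ.symm c ∈ Ls := by
        rw [hc, map_mul, map_pow, AlgEquiv.commutes, hφsymmK]
        exact mul_mem (pow_mem (IntermediateField.algebraMap_mem Ls ζ) i) (hKmem _)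
      exact mul_mem (inv_mem hφsc) hβmem
    intro z hz
    exact ⟨φ.symm z, h2 ⟨z, hz, rfl⟩, φ.apply_symm_apply z⟩
  -- the induced automorphism of Ls
  set ψ : Ls ≃ₐ[F] Ls := (intermediateFieldMap φ Ls).trans (equivOfEq hmapφ) with hψdef
  have hψcoe : ∀ z : Ls, (ψ z : Ω) = φ (z : Ω) := fun z => rfl
  have hψpow : ∀ (k : ℕ) (z : Ls), ((ψ ^ k) z : Ω) = (φ ^ k) (z : Ω) := by
    intro k
    induction k with
    | zero => intro z; simp
    | succ k ih =>
      intro z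
      rw [pow_succ, AlgEquiv.mul_apply, ih, hψcoe, pow_succ, AlgEquiv.mul_apply]
  -- powers of φ applied to β
  have hφkβ : ∀ k : ℕ, (φ ^ k) β =
      algebraMap F Ω ζ ^ (i * k) * algebraMap K Ω (∏ j ∈ Finset.range k, (σ ^ j) x) * β := by
    intro k
    induction k with
    | zero => simp
    | succ k ih =>
      have hσprod : σ (∏ j ∈ Finset.range k, (σ ^ j) x)
          = ∏ j ∈ Finset.range k, (σ ^ (j + 1)) x := by
        rw [map_prod]
        exact Finset.prod_congr rfl fun j _ => by rw [pow_succ', AlgEquiv.mul_apply]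
      rw [pow_succ', AlgEquiv.mul_apply, ih, map_mul, map_mul, map_pow, AlgEquiv.commutes,
        hφK, hφβ, hσprod, Finset.prod_range_succ', map_mul, hc]
      have h0 : ((σ : K ≃ₐ[F] K) ^ (0 : ℕ)) x = x := by simp
      rw [h0]
      ring
  -- the product over the Galois group is the norm
  have hprod : ∏ j ∈ Finset.range n, (σ ^ j) x = algebraMap F K ζ := by
    have hb : Function.Bijective (fun j : Fin n => σ ^ (j : ℕ)) := by
      rw [Fintype.bijective_iff_injective_and_card]
      constructor
      · intro a b hab
        exact Fin.ext (pow_injOn_Iio_orderOf (by rw [hords]; exact a.2)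
          (by rw [hords]; exact b.2) hab)
      · rw [Fintype.card_fin, ← Nat.card_eq_fintype_card, hcard]
    have h3 := Algebra.norm_eq_prod_automorphisms F x
    rw [hx] at h3
    calc ∏ j ∈ Finset.range n, (σ ^ j) x
        = ∏ j : Fin n, (σ ^ (j : ℕ)) x := (Fin.prod_univ_eq_prod_range _ n).symm
      _ = ∏ τ : K ≃ₐ[F] K, τ x := Fintype.prod_bijective _ hb _ _ (fun j => rfl)
      _ = algebraMap F K ζ := h3.symm
  have hφnβ : (φ ^ n) β = algebraMap F Ω ζ * β := by
    rw [hφkβ n, hprod, ← IsScalarTower.algebraMap_apply F K Ω, mul_comm i n, pow_mul,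
      hζΩ.pow_eq_one, one_pow, one_mul]
  have hφnkβ : ∀ k : ℕ, (φ ^ (n * k)) β = algebraMap F Ω ζ ^ k * β := by
    intro k
    induction k with
    | zero => simp
    | succ k ih =>
      have : n * (k + 1) = n * k + n := by ring
      rw [this, pow_add, AlgEquiv.mul_apply, hφnβ, map_mul, AlgEquiv.commutes, ih, pow_succ]
      ring
  -- ψ ^ (n * n) = 1
  have hψ1 : ψ ^ (n * n) = 1 := by
    have hfix : Ls ≤ fixedIF F Ω (φ ^ (n * n)) := by
      rw [hLs]
      refine adjoin_le_iff.2 ?_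
      rintro z (⟨a, rfl⟩ | hz)
      · rw [SetLike.mem_coe, mem_fixedIF, hφKpow]
        have hσ1 : σ ^ (n * n) = 1 := by rw [pow_mul, hσn, one_pow]
        rw [hσ1]
        rfl
      · cases hz
        rw [SetLike.mem_coe, mem_fixedIF, hφnkβ n, hζΩ.pow_eq_one, one_mul]
    ext z
    have h0 : ((ψ ^ (n * n)) z : Ω) = z := by
      rw [hψpow]
      have hz := hfix z.2
      rwa [mem_fixedIF] at hz
    exact_mod_cast h0
  -- order of ψ is exactly n * n
  have hψord : orderOf ψ = n * n := by
    have hdvd1 : orderOf ψ ∣ n * n := orderOf_dvd_of_pow_eq_one hψ1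
    have hdvd2 : n * n ∣ orderOf ψ := by
      set m := orderOf ψ with hm
      have hψm : ψ ^ m = 1 := pow_orderOf_eq_one ψ
      have hσm : σ ^ m = 1 := by
        ext a
        have h0 : ((ψ ^ m) ⟨algebraMap K Ω a, hKmem a⟩ : Ω) = algebraMap K Ω a := by
          rw [hψm]; rfl
        rw [hψpow, hφKpow] at h0
        have := (algebraMap K Ω).injective h0
        simpa using this
      have hn_dvd : n ∣ m := hords ▸ orderOf_dvd_of_pow_eq_one hσm
      obtain ⟨k, hk⟩ := hn_dvd
      have h0 : ((ψ ^ m) ⟨β, hβmem⟩ : Ω) = β := by rw [hψm]; rfl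
      rw [hψpow] at h0
      simp only at h0
      rw [hk, hφnkβ] at h0
      have hζk : algebraMap F Ω ζ ^ k = 1 := by
        have := mul_right_cancel₀ hβ0 (h0.trans (one_mul β).symm)
        exact this
      have hnk : n ∣ k := (hζΩ.pow_eq_one_iff_dvd k).1 hζk
      rw [hk]
      exact mul_dvd_mul_left n hnk
    exact Nat.dvd_antisymm hdvd1 hdvd2
  -- cardinality of the automorphism group
  have hcard_le : Nat.card (Ls ≃ₐ[F] Ls) ≤ Module.finrank F Ls := by
    have hinj : Function.Injective
        (fun g : Ls ≃ₐ[F] Ls => Ls.val.comp (g : Ls →ₐ[F] Ls)) := by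
      intro g g' h
      ext z
      have h2 : Ls.val (g z) = Ls.val (g' z) := AlgHom.congr_fun h z
      exact h2
    calc Nat.card (Ls ≃ₐ[F] Ls) ≤ Nat.card (Ls →ₐ[F] Ω) :=
          Nat.card_le_card_of_injective _ hinj
      _ = Module.finrank F Ls := by
          rw [Nat.card_eq_fintype_card]
          exact AlgHom.card F Ls Ω
  have hlow : n * n ≤ Nat.card (Ls ≃ₐ[F] Ls) := by
    rw [← hψord]
    exact Nat.le_of_dvd Nat.card_pos (orderOf_dvd_natCard ψ)
  have hnn : n * n = n ^ 2 := (pow_two n).symm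
  have hcard_eq : Nat.card (Ls ≃ₐ[F] Ls) = n ^ 2 := by
    have := le_trans hcard_le hupper
    omega
  have hfinrank : Module.finrank F Ls = n ^ 2 := by
    have h1 : n ^ 2 ≤ Nat.card (Ls ≃ₐ[F] Ls) := by omega
    have := le_trans h1 hcard_le
    omega
  have hgal : IsGalois F Ls := by
    apply IsGalois.of_card_aut_eq_finrank
    rw [hcard_eq, hfinrank]
  have hcyc : IsCyclic (Ls ≃ₐ[F] Ls) := by
    apply isCyclic_of_orderOf_eq_card ψ
    rw [hψord, hcard_eq, hnn]
  exact ⟨hgal, hfinrank, hcyc⟩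
end

section
/- Let p be a prime with p ≡ 1 (mod 4) and let t be a positive squarefree integer coprime to p. Let F = ℚ(√(−pt)) and K = F(√p). Then K/F is a degree 2 extension in which every nonzero prime ideal of O_F is unramified in O_K (and every infinite place of F is complex, so K/F is everywhere unramified). -/
open NumberField Polynomial

attribute [local instance] FractionRing.liftAlgebra FractionRing.isScalarTower_liftAlgebra

private theorem minpoly_eq_quad {F K : Type*} [Field F] [Field K] [Algebra F K]
    (x : K) (g : F[X]) (hm : g.Monic) (hdeg : g.natDegree = 2)
    (hroot : Polynomial.aeval x g = 0) (hx : x ∉ (algebraMap F K).range) :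
    minpoly F x = g := by
  have hint : IsIntegral F x := ⟨g, hm, hroot⟩
  have hdvd : minpoly F x ∣ g := minpoly.dvd F x hroot
  have hm' : (minpoly F x).Monic := minpoly.monic hint
  have h2 : 2 ≤ (minpoly F x).natDegree := (minpoly.two_le_natDegree_iff hint).mpr hx
  obtain ⟨c, hc⟩ := hdvd
  have hg0 : g ≠ 0 := hm.ne_zero
  have hc0 : c ≠ 0 := by rintro rfl; rw [mul_zero] at hc; exact hg0 hc
  have hdc : c.natDegree = 0 := by
    have hnd := Polynomial.natDegree_mul hm'.ne_zero hc0
    rw [← hc, hdeg] at hnd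
    omega
  have hcC : c = Polynomial.C (c.coeff 0) := Polynomial.eq_C_of_natDegree_eq_zero hdc
  have hlc : c.coeff 0 = 1 := by
    have hl := congrArg Polynomial.leadingCoeff hc
    rw [Polynomial.leadingCoeff_mul, hm.leadingCoeff, hm'.leadingCoeff, one_mul,
      Polynomial.leadingCoeff, hdc] at hl
    exact hl.symm
  rw [hc, hcC, hlc, Polynomial.C_1, mul_one]

set_option maxHeartbeats 1000000 in
theorem sqrt_p_everywhere_unramified_over_Q_sqrt_neg_pt
    (p t : ℕ) (hp : p.Prime) (hp4 : p % 4 = 1)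
    (ht : Squarefree t) (ht0 : 0 < t) (hcop : Nat.Coprime t p)
    (F : Type) [Field F] [NumberField F]
    (s : F) (hs : s ^ 2 = -((p : F) * (t : F)))
    (hFgen : IntermediateField.adjoin ℚ {s} = (⊤ : IntermediateField ℚ F))
    (K : Type) [Field K] [NumberField K] [Algebra F K]
    (r : K) (hr : r ^ 2 = (p : K))
    (hKgen : IntermediateField.adjoin F {r} = (⊤ : IntermediateField F K)) :
    Module.finrank F K = 2 ∧
    (∀ (q : Ideal (𝓞 F)) (P : Ideal (𝓞 K)), q ≠ ⊥ → q.IsPrime → P.IsPrime →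
      Ideal.comap (algebraMap (𝓞 F) (𝓞 K)) P = q →
      Ideal.ramificationIdx' q P = 1) ∧
    (∀ w : InfinitePlace F, w.IsComplex) := by
  classical
  have hppos : (0:ℚ) < p := by exact_mod_cast hp.pos
  have htpos : (0:ℚ) < t := by exact_mod_cast ht0
  have hpK : ((p:ℕ):K) ≠ 0 := Nat.cast_ne_zero.mpr hp.ne_zero
  -- s is not rational
  have hsQ : s ∉ (algebraMap ℚ F).range := by
    rintro ⟨a, ha⟩
    have h1 : algebraMap ℚ F (a ^ 2 + (p:ℚ) * (t:ℚ)) = algebraMap ℚ F 0 := by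
      rw [map_add, map_pow, ha, map_mul, map_natCast, map_natCast, hs, map_zero]
      ring
    have h2 : a ^ 2 + (p:ℚ) * (t:ℚ) = 0 := (algebraMap ℚ F).injective h1
    nlinarith [sq_nonneg a, mul_pos hppos htpos]
  -- s ≠ 0
  have hs0 : s ≠ 0 := by
    intro h
    have h0 : ((p * t : ℕ) : F) = 0 := by
      push_cast
      rw [← neg_eq_zero, ← hs, h]
      ring
    exact (Nat.mul_pos hp.pos ht0).ne' (Nat.cast_eq_zero.mp h0)
  -- s is integral over ℚ
  have hsint : IsIntegral ℚ s := by
    refine ⟨X ^ 2 + C ((p:ℚ) * (t:ℚ)), monic_X_pow_add_C _ (by norm_num), ?_⟩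
    rw [← aeval_def, map_add, aeval_X_pow, aeval_C, hs, map_mul, map_natCast, map_natCast]
    ring
  have htopF : Algebra.adjoin ℚ {s} = ⊤ := by
    have h := IntermediateField.adjoin_simple_toSubalgebra_of_isAlgebraic hsint.isAlgebraic
    rw [hFgen, IntermediateField.top_toSubalgebra] at h
    exact h.symm
  -- no square root of p in F
  have hnosqrt : ∀ y : F, y ^ 2 ≠ (p : F) := by
    intro y hy
    have hy' : y ∈ Algebra.adjoin ℚ {s} := htopF.symm ▸ Algebra.mem_top
    rw [Algebra.adjoin_singleton_eq_range_aeval] at hy'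
    obtain ⟨P, hP⟩ := hy'
    set g : ℚ[X] := X ^ 2 + C ((p:ℚ) * (t:ℚ)) with hgdef
    have hgm : g.Monic := monic_X_pow_add_C _ (by norm_num)
    have hgs : aeval s g = 0 := by
      rw [hgdef, map_add, aeval_X_pow, aeval_C, hs, map_mul, map_natCast, map_natCast]
      ring
    set a : ℚ := (P %ₘ g).coeff 0 with hadef
    set b : ℚ := (P %ₘ g).coeff 1 with hbdef
    have hrem : y = algebraMap ℚ F a + algebraMap ℚ F b * s := by
      have hmod : P %ₘ g + g * (P /ₘ g) = P := Polynomial.modByMonic_add_div P g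
      have h1 : aeval s P = aeval s (P %ₘ g) := by
        conv_lhs => rw [← hmod]
        rw [map_add, map_mul, hgs, zero_mul, add_zero]
      have hdlt : (P %ₘ g).degree ≤ 1 := by
        have hlt := Polynomial.degree_modByMonic_lt P hgm
        have hdg : g.degree = 2 := by
          rw [hgdef]
          compute_degree!
        rw [hdg] at hlt
        exact Order.le_of_lt_succ (by exact_mod_cast hlt)
      have heq := Polynomial.eq_X_add_C_of_degree_le_one hdlt
      have hP' : Polynomial.aeval s P = y := hP
      rw [← hP', h1, heq]
      simp only [map_add, map_mul, aeval_X, aeval_C, ← hadef, ← hbdef]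
      ring
    have hindep : ∀ c d : ℚ, algebraMap ℚ F c + algebraMap ℚ F d * s = 0 → c = 0 ∧ d = 0 := by
      intro c d h
      by_cases hd : d = 0
      · refine ⟨?_, hd⟩
        rw [hd, map_zero, zero_mul, add_zero] at h
        exact (algebraMap ℚ F).injective (by rw [h, map_zero])
      · exfalso
        apply hsQ
        refine ⟨-c / d, ?_⟩
        have hdF : algebraMap ℚ F d ≠ 0 := by
          simpa using fun h' => hd ((algebraMap ℚ F).injective (by rw [h', map_zero]))
        rw [map_div₀, map_neg, div_eq_iff hdF]
        linear_combination -h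
    rw [hrem] at hy
    have key : algebraMap ℚ F (a ^ 2 - (p:ℚ) * (t:ℚ) * b ^ 2 - (p:ℚ)) +
        algebraMap ℚ F (2 * a * b) * s = 0 := by
      simp only [map_sub, map_mul, map_pow, map_natCast, map_ofNat]
      linear_combination hy - (algebraMap ℚ F b) ^ 2 * hs
    obtain ⟨h1, h2⟩ := hindep _ _ key
    rcases mul_eq_zero.mp (show a * b = 0 by linarith) with ha0 | hb0
    · rw [ha0] at h1
      nlinarith [sq_nonneg b, mul_pos hppos htpos]
    · rw [hb0] at h1
      have haa : a ^ 2 = (p:ℚ) := by nlinarith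
      apply hp.irrational_sqrt
      refine ⟨|a|, ?_⟩
      have hra : ((p:ℝ)) = ((a:ℝ)) ^ 2 := by exact_mod_cast haa.symm
      rw [hra, Real.sqrt_sq_eq_abs]
      push_cast
      ring
  -- r is not in F
  have hrK : r ∉ (algebraMap F K).range := by
    rintro ⟨y, hy⟩
    exact hnosqrt y ((algebraMap F K).injective (by rw [map_pow, hy, hr, map_natCast]))
  have hr0 : r ≠ 0 := by
    intro h
    apply hpK
    rw [← hr, h]
    ring
  -- minpoly of r over F and the degree
  have hrootr : aeval r (X ^ 2 - C ((p:ℕ):F)) = 0 := by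
    rw [map_sub, aeval_X_pow, aeval_C, hr, map_natCast]
    ring
  have hrint : IsIntegral F r := ⟨_, monic_X_pow_sub_C _ two_ne_zero, hrootr⟩
  have hmr : minpoly F r = X ^ 2 - C ((p:ℕ):F) :=
    minpoly_eq_quad r _ (monic_X_pow_sub_C _ two_ne_zero) (natDegree_X_pow_sub_C) hrootr hrK
  have hfin2 : Module.finrank F K = 2 := by
    rw [← IntermediateField.finrank_top', ← hKgen, IntermediateField.adjoin.finrank hrint, hmr,
      natDegree_X_pow_sub_C]
  haveI hFD : FiniteDimensional F K := by
    have hfd : FiniteDimensional F (IntermediateField.adjoin F {r}) :=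
      IntermediateField.adjoin.finiteDimensional hrint
    rw [hKgen] at hfd
    exact Module.Finite.equiv (IntermediateField.topEquiv (F := F) (E := K)).toLinearEquiv
  -- the element u = s / r, with u ^ 2 = -t
  set u : K := algebraMap F K s / r with hudef
  have hmaps0 : algebraMap F K s ≠ 0 := by
    simpa using fun h' => hs0 ((algebraMap F K).injective (by rw [h', map_zero]))
  have hu2 : u ^ 2 = -((t:ℕ):K) := by
    rw [hudef, div_pow, hr, ← map_pow, hs]
    push_cast
    field_simp
  have hu0 : u ≠ 0 := by
    intro h
    have : ((t:ℕ):K) = 0 := by rw [← neg_eq_zero, ← hu2, h]; ring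
    exact ht0.ne' (Nat.cast_eq_zero.mp this)
  have huK : u ∉ (algebraMap F K).range := by
    rintro ⟨y, hy⟩
    apply hrK
    refine ⟨s / y, ?_⟩
    have hy0 : algebraMap F K y ≠ 0 := by rw [hy]; exact hu0
    rw [map_div₀, hy, hudef]
    field_simp
  have hrootu : aeval u (X ^ 2 - C (-((t:ℕ):F))) = 0 := by
    rw [map_sub, aeval_X_pow, aeval_C, hu2, map_neg, map_natCast]
    ring
  have hmu : minpoly F u = X ^ 2 - C (-((t:ℕ):F)) :=
    minpoly_eq_quad u _ (monic_X_pow_sub_C _ two_ne_zero) (natDegree_X_pow_sub_C) hrootu huK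
  -- the element θ = (1 + r)/2
  set θ : K := (1 + r) / 2 with hθdef
  set k : ℕ := p / 4 with hkdef
  have hk : p = 4 * k + 1 := by omega
  have hpk : ((p:ℕ):K) = 4 * ((k:ℕ):K) + 1 := by exact_mod_cast congrArg (Nat.cast : ℕ → K) hk
  have hθeq : θ ^ 2 - (θ + ((k:ℕ):K)) = 0 := by
    rw [hθdef]
    linear_combination hr / 4 + hpk / 4
  have hrθ : r = θ + θ - 1 := by
    rw [hθdef]
    ring
  have hθK : θ ∉ (algebraMap F K).range := by
    rintro ⟨y, hy⟩
    apply hrK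
    refine ⟨y + y - 1, ?_⟩
    rw [map_sub, map_add, map_one, hy, ← hrθ]
  have hrootθ : aeval θ (X ^ 2 - (X + C ((k:ℕ):F))) = 0 := by
    rw [map_sub, map_add, aeval_X_pow, aeval_X, aeval_C, map_natCast]
    exact hθeq
  have hgθm : (X ^ 2 - (X + C ((k:ℕ):F))).Monic := by
    have h1 : (X + C ((k:ℕ):F)).degree < ((2:ℕ) : WithBot ℕ) := by
      rw [Polynomial.degree_X_add_C]
      exact_mod_cast Nat.one_lt_two
    exact monic_X_pow_sub h1
  have hgθd : (X ^ 2 - (X + C ((k:ℕ):F))).natDegree = 2 := by compute_degree!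
  have hmθ : minpoly F θ = X ^ 2 - (X + C ((k:ℕ):F)) :=
    minpoly_eq_quad θ _ hgθm hgθd hrootθ hθK
  -- integrality over ℤ
  have hrI : IsIntegral ℤ r := by
    refine ⟨X ^ 2 - C ((p:ℕ):ℤ), monic_X_pow_sub_C _ two_ne_zero, ?_⟩
    rw [← aeval_def, map_sub, aeval_X_pow, aeval_C, hr]
    push_cast
    ring
  have huI : IsIntegral ℤ u := by
    refine ⟨X ^ 2 - C (-((t:ℕ):ℤ)), monic_X_pow_sub_C _ two_ne_zero, ?_⟩
    rw [← aeval_def, map_sub, aeval_X_pow, aeval_C, hu2]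
    push_cast
    ring
  have hθI : IsIntegral ℤ θ := by
    refine ⟨X ^ 2 - (X + C ((k:ℕ):ℤ)), ?_, ?_⟩
    · have h1 : (X + C ((k:ℕ):ℤ)).degree < ((2:ℕ) : WithBot ℕ) := by
        rw [Polynomial.degree_X_add_C]
        exact_mod_cast Nat.one_lt_two
      exact monic_X_pow_sub h1
    · rw [← aeval_def, map_sub, map_add, aeval_X_pow, aeval_X, aeval_C]
      push_cast
      exact hθeq
  set rB : 𝓞 K := ⟨r, hrI⟩ with hrBdef
  set uB : 𝓞 K := ⟨u, huI⟩ with huBdef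
  set θB : 𝓞 K := ⟨θ, hθI⟩ with hθBdef
  -- instances
  have hinj : Function.Injective (algebraMap (𝓞 F) (𝓞 K)) := by
    have h1 : Function.Injective (algebraMap (𝓞 F) K) := by
      rw [IsScalarTower.algebraMap_eq (𝓞 F) F K]
      exact (algebraMap F K).injective.comp RingOfIntegers.coe_injective
    rw [IsScalarTower.algebraMap_eq (𝓞 F) (𝓞 K) K, RingHom.coe_comp] at h1
    exact Function.Injective.of_comp h1
  haveI : Module.IsTorsionFree (𝓞 F) (𝓞 K) := Module.isTorsionFree_iff_algebraMap_injective.mpr hinj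
  haveI : Module.Finite (𝓞 F) (𝓞 K) := ⟨IsNoetherian.noetherian ⊤⟩
  haveI : Algebra.IsSeparable (FractionRing (𝓞 F)) (FractionRing (𝓞 K)) := by
    refine Algebra.IsSeparable.of_equiv_equiv
      ((FractionRing.algEquiv (𝓞 F) F).symm.toRingEquiv)
      ((FractionRing.algEquiv (𝓞 K) K).symm.toRingEquiv) ?_
    apply IsLocalization.ringHom_ext (nonZeroDivisors (𝓞 F))
    ext x
    simp only [RingHom.coe_comp, Function.comp_apply, RingEquiv.coe_toRingHom,
      AlgEquiv.toRingEquiv_eq_coe, AlgEquiv.coe_ringEquiv]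
    rw [show ((FractionRing.algEquiv (𝓞 F) F).symm ((algebraMap (𝓞 F) F) x))
        = algebraMap (𝓞 F) (FractionRing (𝓞 F)) x from
        (FractionRing.algEquiv (𝓞 F) F).symm.commutes x,
      ← IsScalarTower.algebraMap_apply (𝓞 F) (FractionRing (𝓞 F)) (FractionRing (𝓞 K)),
      ← IsScalarTower.algebraMap_apply (𝓞 F) F K,
      IsScalarTower.algebraMap_apply (𝓞 F) (𝓞 K) K,
      show ((FractionRing.algEquiv (𝓞 K) K).symm ((algebraMap (𝓞 K) K) (algebraMap (𝓞 F) (𝓞 K) x)))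
        = algebraMap (𝓞 K) (FractionRing (𝓞 K)) (algebraMap (𝓞 F) (𝓞 K) x) from
        (FractionRing.algEquiv (𝓞 K) K).symm.commutes _,
      ← IsScalarTower.algebraMap_apply (𝓞 F) (𝓞 K) (FractionRing (𝓞 K))]
  -- generation statements as subalgebras
  have hcoeθ : algebraMap (𝓞 K) K θB = θ := rfl
  have hcoeu : algebraMap (𝓞 K) K uB = u := rfl
  have hcoer : algebraMap (𝓞 K) K rB = r := rfl
  have hθint : IsIntegral F θ := ⟨_, hgθm, hrootθ⟩
  have huint : IsIntegral F u := ⟨_, monic_X_pow_sub_C _ two_ne_zero, hrootu⟩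
  have hadjθ : Algebra.adjoin F {algebraMap (𝓞 K) K θB} = ⊤ := by
    rw [hcoeθ]
    have hIF : IntermediateField.adjoin F {θ} = ⊤ := by
      rw [eq_top_iff, ← hKgen, IntermediateField.adjoin_le_iff]
      intro x hx
      rw [Set.mem_singleton_iff] at hx
      rw [hx, hrθ]
      have hθmem : θ ∈ IntermediateField.adjoin F {θ} :=
        IntermediateField.mem_adjoin_simple_self F θ
      exact sub_mem (add_mem hθmem hθmem) (one_mem _)
    have h := IntermediateField.adjoin_simple_toSubalgebra_of_isAlgebraic hθint.isAlgebraic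
    rw [hIF, IntermediateField.top_toSubalgebra] at h
    exact h.symm
  have hadju : Algebra.adjoin F {algebraMap (𝓞 K) K uB} = ⊤ := by
    rw [hcoeu]
    have hIF : IntermediateField.adjoin F {u} = ⊤ := by
      rw [eq_top_iff, ← hKgen, IntermediateField.adjoin_le_iff]
      intro x hx
      rw [Set.mem_singleton_iff] at hx
      rw [hx]
      have humem : u ∈ IntermediateField.adjoin F {u} :=
        IntermediateField.mem_adjoin_simple_self F u
      have hsmem : algebraMap F K s ∈ IntermediateField.adjoin F {u} :=
        (IntermediateField.adjoin F {u}).algebraMap_mem s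
      have hru : r = algebraMap F K s / u := by
        rw [hudef]
        field_simp
      rw [hru]
      exact div_mem hsmem humem
    have h := IntermediateField.adjoin_simple_toSubalgebra_of_isAlgebraic huint.isAlgebraic
    rw [hIF, IntermediateField.top_toSubalgebra] at h
    exact h.symm
  -- rB and 2 * uB are in the different ideal
  have hdθ := aeval_derivative_mem_differentIdeal (𝓞 F) F K θB hadjθ
  have hdu := aeval_derivative_mem_differentIdeal (𝓞 F) F K uB hadju
  have hθint' : IsIntegral (𝓞 F) θB := Algebra.IsIntegral.isIntegral θB
  have huint' : IsIntegral (𝓞 F) uB := Algebra.IsIntegral.isIntegral uB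
  have hminθ : minpoly F (algebraMap (𝓞 K) K θB) = (minpoly (𝓞 F) θB).map (algebraMap (𝓞 F) F) :=
    minpoly.isIntegrallyClosed_eq_field_fractions F K hθint'
  have hminu : minpoly F (algebraMap (𝓞 K) K uB) = (minpoly (𝓞 F) uB).map (algebraMap (𝓞 F) F) :=
    minpoly.isIntegrallyClosed_eq_field_fractions F K huint'
  rw [hcoeθ] at hminθ
  rw [hcoeu] at hminu
  have hθBval : aeval θB (derivative (minpoly (𝓞 F) θB)) = rB := by
    apply RingOfIntegers.coe_injective
    rw [show algebraMap (𝓞 K) K (aeval θB (derivative (minpoly (𝓞 F) θB)))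
        = aeval (algebraMap (𝓞 K) K θB) (derivative (minpoly (𝓞 F) θB)) from
        (aeval_algebraMap_apply K θB _).symm, hcoeθ, hcoer,
      ← aeval_map_algebraMap F, ← derivative_map, ← hminθ, hmθ,
      show derivative (X ^ 2 - (X + C ((k:ℕ):F))) = C 2 * X - 1 by
        rw [derivative_sub, derivative_add, derivative_X_pow, derivative_X, derivative_C]
        ring]
    simp only [map_sub, map_mul, aeval_C, aeval_X, map_one, map_ofNat]
    rw [hrθ]
    ring
  have huBval : aeval uB (derivative (minpoly (𝓞 F) uB)) = 2 * uB := by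
    apply RingOfIntegers.coe_injective
    rw [show algebraMap (𝓞 K) K (aeval uB (derivative (minpoly (𝓞 F) uB)))
        = aeval (algebraMap (𝓞 K) K uB) (derivative (minpoly (𝓞 F) uB)) from
        (aeval_algebraMap_apply K uB _).symm, hcoeu,
      ← aeval_map_algebraMap F, ← derivative_map, ← hminu, hmu]
    have hco : algebraMap (𝓞 K) K (2 * uB) = 2 * u := by
      rw [map_mul, hcoeu, map_ofNat]
    rw [hco,
      show derivative (X ^ 2 - C (-((t:ℕ):F))) = C 2 * X by
        rw [derivative_sub, derivative_X_pow, derivative_C]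
        ring]
    simp only [map_mul, aeval_C, aeval_X, map_ofNat]
  rw [hθBval] at hdθ
  rw [huBval] at hdu
  -- Bezout between p and 4t
  have hc4 : Nat.Coprime p 4 := by
    refine (Nat.Prime.coprime_iff_not_dvd hp).mpr ?_
    intro hd
    have hd' : p ∣ 2 ^ 2 := by
      rw [show (2:ℕ) ^ 2 = 4 by norm_num]
      exact hd
    have h2 : p ∣ 2 := hp.dvd_of_dvd_pow hd'
    have : p = 2 := (Nat.prime_dvd_prime_iff_eq hp Nat.prime_two).mp h2
    omega
  have hcall : Nat.Coprime p (4 * t) := Nat.Coprime.mul_right hc4 hcop.symm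
  have hIC : IsCoprime ((p:ℕ):ℤ) (((4 * t : ℕ)):ℤ) := Nat.isCoprime_iff_coprime.mpr hcall
  obtain ⟨A, B, hAB⟩ := hIC
  have hABK : (A:K) * ((p:ℕ):K) + (B:K) * (4 * ((t:ℕ):K)) = 1 := by
    have h := congrArg (Int.cast : ℤ → K) hAB
    push_cast at h
    linear_combination h
  have hkey : (1:K) = (A:K) * (r * r) + (B:K) * (-(2 * u * (2 * u))) := by
    linear_combination (-(A:K)) * hr + 4 * (B:K) * hu2 - hABK
  have hdiffTop : differentIdeal (𝓞 F) (𝓞 K) = ⊤ := by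
    rw [Ideal.eq_top_iff_one]
    have hone : (1 : 𝓞 K) = (A : 𝓞 K) * (rB * rB) + (B : 𝓞 K) * (-(2 * uB * (2 * uB))) := by
      apply RingOfIntegers.coe_injective
      simp only [map_one, map_add, map_mul, map_neg, map_intCast, map_ofNat, hcoer, hcoeu]
      exact hkey
    rw [hone]
    exact Ideal.add_mem _ (Ideal.mul_mem_left _ _ (Ideal.mul_mem_left _ _ hdθ))
      (Ideal.mul_mem_left _ _ (neg_mem (Ideal.mul_mem_left _ _ hdu)))
  refine ⟨hfin2, ?_, ?_⟩
  · intro q P hq0 hqP hPP hcomap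
    haveI : q.IsMaximal := Ideal.IsPrime.isMaximal hqP hq0
    have hmapbot : q.map (algebraMap (𝓞 F) (𝓞 K)) ≠ ⊥ := fun hbot =>
      hq0 ((Ideal.map_eq_bot_iff_of_injective hinj).mp hbot)
    have hle : q.map (algebraMap (𝓞 F) (𝓞 K)) ≤ P := by
      rw [Ideal.map_le_iff_le_comap, hcomap]
    have hne := Ideal.IsDedekindDomain.ramificationIdx'_ne_zero hmapbot hPP hle
    set e := Ideal.ramificationIdx' q P with hedef
    have hdvd : P ^ e ∣ q.map (algebraMap (𝓞 F) (𝓞 K)) :=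
      Ideal.dvd_iff_le.mpr Ideal.le_pow_ramificationIdx
    have hdd := pow_sub_one_dvd_differentIdeal (𝓞 F) P e hq0 hdvd
    rw [hdiffTop] at hdd
    have h1 : e - 1 = 0 := by
      by_contra hne'
      exact hPP.ne_top (top_le_iff.mp ((Ideal.le_of_dvd hdd).trans (Ideal.pow_le_self hne')))
    omega
  · intro w
    rw [← InfinitePlace.not_isReal_iff_isComplex]
    intro hreal
    rw [InfinitePlace.isReal_iff] at hreal
    set z : ℂ := w.embedding s with hzdef
    have hconj : (starRingEnd ℂ) z = z := RingHom.congr_fun hreal s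
    have him : z.im = 0 := Complex.conj_eq_iff_im.mp hconj
    have hz2 : z ^ 2 = -(((p:ℕ):ℂ) * ((t:ℕ):ℂ)) := by
      rw [hzdef, ← map_pow, hs, map_neg, map_mul, map_natCast, map_natCast]
    have hre : (z ^ 2).re = z.re ^ 2 - z.im ^ 2 := by
      rw [sq, Complex.mul_re]
      ring
    rw [hz2] at hre
    have hre2 : (-(((p:ℕ):ℂ) * ((t:ℕ):ℂ))).re = -((p:ℝ) * (t:ℝ)) := by
      simp [Complex.mul_re]
    rw [hre2, him] at hre
    have hpR : (0:ℝ) < p := by exact_mod_cast hp.pos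
    have htR : (0:ℝ) < t := by exact_mod_cast ht0
    nlinarith [sq_nonneg z.re]
end

section
/- Let n > 1, let F be a number field containing a primitive n-th root of unity ζ_n, and let a ∈ F^×. Let α be a root of X^n − a in an algebraic closure of F, set K = F(α), and suppose K/F is everywhere unramified (every nonzero prime ideal of O_F is unramified in O_K and every infinite place of F is unramified in K), so that K/F is cyclic of some degree m dividing n. Let σ be the generator of Gal(K/F) with σ(α)/α = ζ_n^{n/m}. Let b be a unit of O_F, let x ∈ K^× satisfy Norm_{K/F}(x) = b, and let ν ∈ K^× satisfy x^m/b = σ(ν)/ν. Then there exists a fractional ideal I of O_F with Norm_{K/F}(ν·α)·O_F = I^m. -/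
open NumberField

open UniqueFactorizationMonoid in
theorem count_normalizedFactors_map_prod' {R S : Type*} [CommRing R] [IsDedekindDomain R]
    [CommRing S] [IsDedekindDomain S] [Algebra R S]
    (hinj : Function.Injective (algebraMap R S))
    [DecidableEq (Ideal R)] [DecidableEq (Ideal S)]
    (P : Ideal S) (hP : P.IsPrime) (hP0 : P ≠ ⊥)
    (hram : Ideal.ramificationIdx' (P.comap (algebraMap R S)) P = 1)
    (T : Multiset (Ideal R)) (hT : ∀ q ∈ T, Prime q) :
    Multiset.count P (normalizedFactors (Ideal.map (algebraMap R S) T.prod)) =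
      Multiset.count (P.comap (algebraMap R S)) T := by
  induction T using Multiset.induction with
  | empty =>
      rw [Multiset.prod_zero, Ideal.one_eq_top, Ideal.map_top, ← Ideal.one_eq_top,
        normalizedFactors_one]
      simp
  | cons q T ih =>
      have hq : Prime q := hT q (Multiset.mem_cons_self q T)
      have hTq : ∀ q' ∈ T, Prime q' := fun q' hq' => hT q' (Multiset.mem_cons_of_mem hq')
      have hT0 : T.prod ≠ 0 := Multiset.prod_ne_zero fun h0 => (hTq 0 h0).ne_zero rfl
      have hmapq : Ideal.map (algebraMap R S) q ≠ ⊥ := fun h =>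
        hq.ne_zero ((Ideal.map_eq_bot_iff_of_injective hinj).mp h)
      have hmapT : Ideal.map (algebraMap R S) T.prod ≠ ⊥ := fun h =>
        hT0 ((Ideal.map_eq_bot_iff_of_injective hinj).mp h)
      have hone : Multiset.count P (normalizedFactors (Ideal.map (algebraMap R S) q)) =
          if P.comap (algebraMap R S) = q then 1 else 0 := by
        by_cases hqP : P.comap (algebraMap R S) = q
        · rw [if_pos hqP, ← hqP]
          convert (Ideal.IsDedekindDomain.ramificationIdx'_eq_normalizedFactors_count
              (p := P.comap (algebraMap R S)) (by rw [hqP]; exact hmapq) hP hP0).symm.trans hram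
        · rw [if_neg hqP]
          by_contra hc
          have hmem : P ∈ normalizedFactors (Ideal.map (algebraMap R S) q) :=
            Multiset.count_pos.mp (Nat.pos_of_ne_zero hc)
          have hdvd : Ideal.map (algebraMap R S) q ≤ P :=
            Ideal.le_of_dvd (dvd_of_mem_normalizedFactors hmem)
          have hle : q ≤ P.comap (algebraMap R S) := Ideal.map_le_iff_le_comap.mp hdvd
          have hqmax : q.IsMaximal :=
            Ideal.IsPrime.isMaximal (Ideal.isPrime_of_prime hq) hq.ne_zero
          exact hqP (hqmax.eq_of_le (Ideal.comap_ne_top _ hP.ne_top) hle).symm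
      rw [Multiset.prod_cons, Ideal.map_mul, normalizedFactors_mul hmapq hmapT,
        Multiset.count_add, ih hTq, Multiset.count_cons, hone, add_comm]

open UniqueFactorizationMonoid FractionalIdeal in
theorem exists_pow_eq_of_count_dvd' {R F : Type*} [CommRing R] [IsDedekindDomain R]
    [Field F] [Algebra R F] [IsFractionRing R F] [DecidableEq (Ideal R)]
    (m : ℕ) (r s : R) (hr : r ≠ 0) (hs : s ≠ 0)
    (h : ∀ p : Ideal R, p ≠ ⊥ → p.IsMaximal →
      (m : ℤ) ∣ ((Multiset.count p (normalizedFactors (Ideal.span {r})) : ℤ)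
        - Multiset.count p (normalizedFactors (Ideal.span {s})))) :
    ∃ I : FractionalIdeal (nonZeroDivisors R) F,
      spanSingleton (nonZeroDivisors R) (algebraMap R F r / algebraMap R F s) = I ^ m := by
  have hJr : Ideal.span {r} ≠ ⊥ := by simpa using hr
  have hJs : Ideal.span {s} ≠ ⊥ := by simpa using hs
  set T : Finset (Ideal R) :=
    (normalizedFactors (Ideal.span {r})).toFinset ∪ (normalizedFactors (Ideal.span {s})).toFinset
    with hT
  have hprime : ∀ p ∈ T, Prime p := by
    intro p hp
    rcases Finset.mem_union.mp hp with hp | hp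
    · exact prime_of_normalized_factor p (Multiset.mem_toFinset.mp hp)
    · exact prime_of_normalized_factor p (Multiset.mem_toFinset.mp hp)
  have hne : ∀ p ∈ T, (p : FractionalIdeal (nonZeroDivisors R) F) ≠ 0 := fun p hp =>
    coeIdeal_ne_zero.mpr (hprime p hp).ne_zero
  have claim : ∀ J : Ideal R, J ≠ ⊥ → (normalizedFactors J).toFinset ⊆ T →
      (J : FractionalIdeal (nonZeroDivisors R) F) =
        ∏ p ∈ T, (p : FractionalIdeal (nonZeroDivisors R) F)
          ^ ((Multiset.count p (normalizedFactors J) : ℤ)) := by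
    intro J hJ hsub
    have h1 : J = ∏ p ∈ T, p ^ (Multiset.count p (normalizedFactors J)) := by
      conv_lhs => rw [← associated_iff_eq.mp (prod_normalizedFactors hJ),
        Finset.prod_multiset_count]
      exact Finset.prod_subset hsub (fun p _ hp => by
        rw [Multiset.count_eq_zero.mpr (fun hmem => hp (Multiset.mem_toFinset.mpr hmem)),
          pow_zero])
    conv_lhs => rw [h1]
    rw [show ((↑(∏ p ∈ T, p ^ (Multiset.count p (normalizedFactors J)))) :
        FractionalIdeal (nonZeroDivisors R) F) =
        coeIdealHom (nonZeroDivisors R) F (∏ p ∈ T, p ^ (Multiset.count p (normalizedFactors J)))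
        from rfl, map_prod]
    exact Finset.prod_congr rfl fun p _ => by rw [map_pow, zpow_natCast]; rfl
  have key : spanSingleton (nonZeroDivisors R) (algebraMap R F r / algebraMap R F s) =
      ((Ideal.span {r} : Ideal R) : FractionalIdeal (nonZeroDivisors R) F)
        * ((Ideal.span {s} : Ideal R) : FractionalIdeal (nonZeroDivisors R) F)⁻¹ := by
    rw [div_eq_mul_inv, ← spanSingleton_mul_spanSingleton, ← one_div_spanSingleton,
      coeIdeal_span_singleton, coeIdeal_span_singleton, one_div]
  refine ⟨∏ p ∈ T, (p : FractionalIdeal (nonZeroDivisors R) F)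
      ^ (((Multiset.count p (normalizedFactors (Ideal.span {r})) : ℤ)
        - Multiset.count p (normalizedFactors (Ideal.span {s}))) / (m : ℤ)), ?_⟩
  rw [key, ← Finset.prod_pow]
  rw [claim _ hJr Finset.subset_union_left, claim _ hJs Finset.subset_union_right,
    ← Finset.prod_inv_distrib, ← Finset.prod_mul_distrib]
  refine Finset.prod_congr rfl fun p hp => ?_
  have hp0 : (p : FractionalIdeal (nonZeroDivisors R) F) ≠ 0 := hne p hp
  have hdvd := h p (hprime p hp).ne_zero
    ((Ideal.isPrime_of_prime (hprime p hp)).isMaximal (hprime p hp).ne_zero)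
  rw [← zpow_natCast _ m, ← zpow_mul, Int.ediv_mul_cancel hdvd, zpow_sub₀ hp0, div_eq_mul_inv]

open FractionalIdeal in
theorem spanSingleton_div_eq' {R₁ K : Type*} [CommRing R₁] [IsDedekindDomain R₁] [Field K]
    [Algebra R₁ K] [IsFractionRing R₁ K] (a b : K) :
    spanSingleton (nonZeroDivisors R₁) (a / b) =
      spanSingleton (nonZeroDivisors R₁) a / spanSingleton (nonZeroDivisors R₁) b := by
  rw [div_eq_mul_inv a b, ← spanSingleton_mul_spanSingleton, ← one_div_spanSingleton,
    _root_.div_eq_mul_inv, _root_.div_eq_mul_inv, one_mul]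

theorem norm_of_nu_alpha_is_mth_power_ideal
    (n : ℕ) (hn : 1 < n)
    (F : Type) [Field F] [NumberField F]
    (ζ : F) (hζ : IsPrimitiveRoot ζ n)
    (a : F) (ha : a ≠ 0)
    (K : Type) [Field K] [NumberField K] [Algebra F K] [IsGalois F K]
    (α : K) (hαa : α ^ n = algebraMap F K a)
    (hKgen : IntermediateField.adjoin F {α} = (⊤ : IntermediateField F K))
    (hunram_fin : ∀ (p : Ideal (𝓞 F)) (P : Ideal (𝓞 K)), p ≠ ⊥ → p.IsPrime → P.IsPrime →
      Ideal.comap (algebraMap (𝓞 F) (𝓞 K)) P = p →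
      Ideal.ramificationIdx' p P = 1)
    (hunram_inf : ∀ w : InfinitePlace K, (w.comap (algebraMap F K)).IsReal → w.IsReal)
    (m : ℕ) (hm : Module.finrank F K = m) (hmn : m ∣ n)
    (σ : K ≃ₐ[F] K)
    (hσgen : ∀ τ : K ≃ₐ[F] K, τ ∈ Subgroup.zpowers σ)
    (hσα : σ α = algebraMap F K (ζ ^ (n / m)) * α)
    (b : (𝓞 F)ˣ)
    (x : K) (hx0 : x ≠ 0) (hx : Algebra.norm F x = algebraMap (𝓞 F) F b)
    (ν : K) (hν0 : ν ≠ 0)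
    (hν : x ^ m / algebraMap F K (algebraMap (𝓞 F) F b) = σ ν / ν) :
    ∃ I : FractionalIdeal (nonZeroDivisors (𝓞 F)) F,
      FractionalIdeal.spanSingleton (nonZeroDivisors (𝓞 F)) (Algebra.norm F (ν * α))
        = I ^ m := by
  classical
  have hm0 : m ≠ 0 := by
    have := Module.finrank_pos (R := F) (M := K)
    omega
  -- basic nonvanishing
  have hα0 : α ≠ 0 := by
    intro h
    apply ha
    have h2 : algebraMap F K a = 0 := by rw [← hαa, h, zero_pow (by omega : n ≠ 0)]
    exact (map_eq_zero (algebraMap F K)).mp h2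
  have hz0 : ν * α ≠ 0 := mul_ne_zero hν0 hα0
  set B : K := algebraMap F K (algebraMap (𝓞 F) F (b : 𝓞 F)) with hB
  have hb0 : ((b : 𝓞 F) : F) ≠ 0 := by
    simpa using b.isUnit.ne_zero (M₀ := 𝓞 F)
  have hB0 : B ≠ 0 := by
    rw [hB]
    exact (map_ne_zero (algebraMap F K)).mpr hb0
  set H : K := algebraMap F K (ζ ^ (n / m)) with hH
  have hζ0 : ζ ≠ 0 := hζ.ne_zero (by omega)
  have hH0 : H ≠ 0 := by
    rw [hH]
    exact (map_ne_zero (algebraMap F K)).mpr (pow_ne_zero _ hζ0)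
  have hσν : σ ν = ν * x ^ m / B := by
    rw [div_eq_div_iff hB0 hν0] at hν
    rw [eq_div_iff hB0]
    linear_combination -hν
  have hσz : σ (ν * α) = (ν * α) * x ^ m * H / B := by
    rw [map_mul, hσν, hσα]
    field_simp
  set c : ℕ → K := fun i => ∏ j ∈ Finset.range i, (σ ^ j) x with hc
  have hσx0 : ∀ j : ℕ, (σ ^ j) x ≠ 0 := by
    intro j hj
    exact hx0 ((map_eq_zero_iff _ (σ ^ j).injective).mp hj)
  have hc0 : ∀ i, c i ≠ 0 := fun i =>
    Finset.prod_ne_zero_iff.mpr fun j _ => hσx0 j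
  have hstep : ∀ i, (σ ^ i) (ν * α) = (ν * α) * (c i) ^ m * H ^ i / B ^ i := by
    intro i
    induction i with
    | zero => simp [hc]
    | succ i ih =>
        have hci : c (i + 1) = σ (c i) * x := by
          show (∏ j ∈ Finset.range (i + 1), (σ ^ j) x)
            = σ (∏ j ∈ Finset.range i, (σ ^ j) x) * x
          rw [Finset.prod_range_succ', map_prod]
          simp only [pow_zero, AlgEquiv.one_apply]
          congr 1
          exact Finset.prod_congr rfl fun j _ => by
            rw [← AlgEquiv.mul_apply, ← pow_succ']
        have h1 : (σ ^ (i + 1)) (ν * α) = σ ((σ ^ i) (ν * α)) := by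
          rw [pow_succ']
          rfl
        have hσH : σ H = H := σ.commutes _
        have hσB : σ B = B := σ.commutes _
        rw [h1, ih, map_div₀, map_mul, map_mul, map_pow, map_pow, map_pow, hσz, hσH, hσB,
          hci]
        field_simp
        ring
  set t : ℕ := ∑ i ∈ Finset.range m, i with ht
  set C : K := ∏ i ∈ Finset.range m, c i with hCdef
  have hC0 : C ≠ 0 := Finset.prod_ne_zero_iff.mpr fun i _ => hc0 i
  have horder : orderOf σ = m := by
    rw [orderOf_eq_card_of_forall_mem_zpowers hσgen,
      IsGalois.card_aut_eq_finrank, hm]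
  have hbij : Function.Bijective (fun i : Fin m => σ ^ (i : ℕ)) := by
    rw [Fintype.bijective_iff_injective_and_card]
    constructor
    · intro i j hij
      exact Fin.ext (pow_injOn_Iio_orderOf (by rw [horder]; exact i.isLt)
        (by rw [horder]; exact j.isLt) hij)
    · rw [Fintype.card_fin, ← Nat.card_eq_fintype_card, IsGalois.card_aut_eq_finrank, hm]
  have hprod : ∏ τ : K ≃ₐ[F] K, τ (ν * α) = ∏ i ∈ Finset.range m, (σ ^ i) (ν * α) := by
    rw [← Fin.prod_univ_eq_prod_range]
    exact (Fintype.prod_bijective _ hbij _ _ fun i => rfl).symm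
  have hY : algebraMap F K (Algebra.norm F (ν * α)) =
      (ν * α) ^ m * C ^ m * H ^ t / B ^ t := by
    rw [Algebra.norm_eq_prod_automorphisms, hprod,
      Finset.prod_congr rfl (fun i _ => hstep i), Finset.prod_div_distrib,
      Finset.prod_mul_distrib, Finset.prod_mul_distrib, Finset.prod_const,
      Finset.card_range, Finset.prod_pow, Finset.prod_pow_eq_pow_sum,
      Finset.prod_pow_eq_pow_sum, ← hCdef, ← ht]
  -- the unit
  have hζint : ζ ∈ integralClosure ℤ F := hζ.isIntegral (by omega)
  set ζO : 𝓞 F := ⟨ζ, hζint⟩ with hζO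
  have hζpow : ζO ^ n = 1 := by
    ext
    push_cast
    exact hζ.pow_eq_one
  have hζunit : IsUnit ζO := IsUnit.of_pow_eq_one hζpow (by omega)
  set wu : (𝓞 F)ˣ := (hζunit.unit ^ (n / m) * b⁻¹) ^ t with hwu
  have hWb : wu * b ^ t = (hζunit.unit ^ (n / m)) ^ t := by
    rw [hwu, ← mul_pow, inv_mul_cancel_right]
  set W : K := algebraMap F K (algebraMap (𝓞 F) F ((wu : (𝓞 F)ˣ) : 𝓞 F)) with hW
  have hWB : W * B ^ t = H ^ t := by
    have hζcoe : algebraMap (𝓞 F) F ζO = ζ := rfl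
    have h4 : (wu : 𝓞 F) * (b : 𝓞 F) ^ t = (ζO ^ (n / m)) ^ t := by
      have h5 := congrArg (fun u : (𝓞 F)ˣ => (u : 𝓞 F)) hWb
      simpa [IsUnit.unit_spec] using h5
    rw [hW, hB, hH]
    simp only [← map_pow]
    simp only [← map_mul]
    rw [h4]
    simp [map_pow, hζcoe]
  have hd0 : (ν * α) * C ≠ 0 := mul_ne_zero hz0 hC0
  have hYd : algebraMap F K (Algebra.norm F (ν * α)) = W * ((ν * α) * C) ^ m := by
    rw [hY, ← hWB]
    field_simp
    ring
  -- Part II : fractional ideals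
  have hy0 : Algebra.norm F (ν * α) ≠ 0 := Algebra.norm_ne_zero_iff.mpr hz0
  obtain ⟨r, s, hsmem, hrs⟩ := IsFractionRing.div_surjective (A := 𝓞 F) (Algebra.norm F (ν * α))
  have hs0 : s ≠ 0 := nonZeroDivisors.ne_zero hsmem
  have hr0 : r ≠ 0 := by
    intro h
    rw [h] at hrs
    simp only [map_zero, zero_div] at hrs
    exact hy0 hrs.symm
  obtain ⟨rd, sd, hsdmem, hdeq⟩ := IsFractionRing.div_surjective (A := 𝓞 K) ((ν * α) * C)
  have hsd0 : sd ≠ 0 := nonZeroDivisors.ne_zero hsdmem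
  have hrd0 : rd ≠ 0 := by
    intro h
    rw [h] at hdeq
    simp only [map_zero, zero_div] at hdeq
    exact hd0 hdeq.symm
  have hinj : Function.Injective (algebraMap (𝓞 F) (𝓞 K)) := by
    intro u v huv
    have h4 : algebraMap (𝓞 K) K (algebraMap (𝓞 F) (𝓞 K) u)
        = algebraMap (𝓞 K) K (algebraMap (𝓞 F) (𝓞 K) v) := by rw [huv]
    rw [← IsScalarTower.algebraMap_apply, ← IsScalarTower.algebraMap_apply] at h4
    have h5 : algebraMap F K (algebraMap (𝓞 F) F u) = algebraMap F K (algebraMap (𝓞 F) F v) := by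
      rw [← IsScalarTower.algebraMap_apply, ← IsScalarTower.algebraMap_apply]
      exact h4
    have h6 := (algebraMap F K).injective h5
    exact RingOfIntegers.coe_injective h6
  -- K-side fractional ideal identity
  have hspanW : FractionalIdeal.spanSingleton (nonZeroDivisors (𝓞 K)) W = 1 := by
    have h7 : W = algebraMap (𝓞 K) K (algebraMap (𝓞 F) (𝓞 K) ((wu : (𝓞 F)ˣ) : 𝓞 F)) := by
      rw [hW, ← IsScalarTower.algebraMap_apply, ← IsScalarTower.algebraMap_apply]
    rw [h7, ← FractionalIdeal.coeIdeal_span_singleton,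
      Ideal.span_singleton_eq_top.mpr (wu.isUnit.map (algebraMap (𝓞 F) (𝓞 K))),
      FractionalIdeal.coeIdeal_top]
  have hr' : algebraMap F K (algebraMap (𝓞 F) F r)
      = algebraMap (𝓞 K) K (algebraMap (𝓞 F) (𝓞 K) r) := by
    rw [← IsScalarTower.algebraMap_apply, ← IsScalarTower.algebraMap_apply]
  have hs' : algebraMap F K (algebraMap (𝓞 F) F s)
      = algebraMap (𝓞 K) K (algebraMap (𝓞 F) (𝓞 K) s) := by
    rw [← IsScalarTower.algebraMap_apply, ← IsScalarTower.algebraMap_apply]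
  have hfrac : (↑(Ideal.span {algebraMap (𝓞 F) (𝓞 K) r}) : FractionalIdeal (nonZeroDivisors (𝓞 K)) K)
      / ↑(Ideal.span {algebraMap (𝓞 F) (𝓞 K) s})
      = (↑(Ideal.span {rd}) : FractionalIdeal (nonZeroDivisors (𝓞 K)) K) ^ m
        / (↑(Ideal.span {sd})) ^ m := by
    have h8 : FractionalIdeal.spanSingleton (nonZeroDivisors (𝓞 K))
        (algebraMap F K (Algebra.norm F (ν * α)))
        = (FractionalIdeal.spanSingleton (nonZeroDivisors (𝓞 K)) ((ν * α) * C)) ^ m := by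
      rw [hYd, ← FractionalIdeal.spanSingleton_mul_spanSingleton, hspanW, one_mul,
        FractionalIdeal.spanSingleton_pow]
    rw [← hrs] at h8
    rw [← hdeq] at h8
    rw [map_div₀, hr', hs'] at h8
    rw [spanSingleton_div_eq', spanSingleton_div_eq', div_pow] at h8
    rw [FractionalIdeal.coeIdeal_span_singleton, FractionalIdeal.coeIdeal_span_singleton,
      FractionalIdeal.coeIdeal_span_singleton, FractionalIdeal.coeIdeal_span_singleton]
    exact h8
  have hmapr0 : algebraMap (𝓞 F) (𝓞 K) r ≠ 0 := fun h => hr0 (hinj (by rw [h, map_zero]))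
  have hmaps0 : algebraMap (𝓞 F) (𝓞 K) s ≠ 0 := fun h => hs0 (hinj (by rw [h, map_zero]))
  have hIr : (↑(Ideal.span {algebraMap (𝓞 F) (𝓞 K) r}) :
      FractionalIdeal (nonZeroDivisors (𝓞 K)) K) ≠ 0 :=
    FractionalIdeal.coeIdeal_ne_zero.mpr (by simpa using hmapr0)
  have hIs : (↑(Ideal.span {algebraMap (𝓞 F) (𝓞 K) s}) :
      FractionalIdeal (nonZeroDivisors (𝓞 K)) K) ≠ 0 :=
    FractionalIdeal.coeIdeal_ne_zero.mpr (by simpa using hmaps0)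
  have hIsd : (↑(Ideal.span {sd}) : FractionalIdeal (nonZeroDivisors (𝓞 K)) K) ≠ 0 :=
    FractionalIdeal.coeIdeal_ne_zero.mpr (by simpa using hsd0)
  have hEq : Ideal.span {algebraMap (𝓞 F) (𝓞 K) r} * Ideal.span {sd} ^ m
      = Ideal.span {rd} ^ m * Ideal.span {algebraMap (𝓞 F) (𝓞 K) s} := by
    apply FractionalIdeal.coeIdeal_injective (K := K)
    simp only [FractionalIdeal.coeIdeal_mul, FractionalIdeal.coeIdeal_pow]
    rw [div_eq_div_iff hIs (pow_ne_zero m hIsd)] at hfrac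
    exact_mod_cast hfrac
  -- counts
  have hdvd : ∀ p : Ideal (𝓞 F), p ≠ ⊥ → p.IsMaximal →
      (m : ℤ) ∣ ((Multiset.count p (UniqueFactorizationMonoid.normalizedFactors
          (Ideal.span {r})) : ℤ)
        - Multiset.count p (UniqueFactorizationMonoid.normalizedFactors (Ideal.span {s}))) := by
    intro p hp0 hpmax
    obtain ⟨P, hPmax, hPcomap⟩ := Ideal.exists_ideal_over_maximal_of_isIntegral
      (S := 𝓞 K) p (by rw [(RingHom.injective_iff_ker_eq_bot _).mp hinj]; exact bot_le)
    have hP0 : P ≠ ⊥ := by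
      intro h
      rw [h, Ideal.comap_bot_of_injective _ hinj] at hPcomap
      exact hp0 hPcomap.symm
    have hram : Ideal.ramificationIdx'
        (P.comap (algebraMap (𝓞 F) (𝓞 K))) P = 1 := by
      rw [hPcomap]
      exact hunram_fin p P hp0 hpmax.isPrime hPmax.isPrime hPcomap
    have htrans : ∀ u : 𝓞 F, u ≠ 0 →
        Multiset.count P (UniqueFactorizationMonoid.normalizedFactors
          (Ideal.span {algebraMap (𝓞 F) (𝓞 K) u}))
        = Multiset.count p (UniqueFactorizationMonoid.normalizedFactors (Ideal.span {u})) := by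
      intro u hu0
      have hJu : Ideal.span {u} ≠ ⊥ := by simpa using hu0
      have h9 := count_normalizedFactors_map_prod' hinj P hPmax.isPrime hP0 hram
        (UniqueFactorizationMonoid.normalizedFactors (Ideal.span {u}))
        (fun q hq => UniqueFactorizationMonoid.prime_of_normalized_factor q hq)
      rw [associated_iff_eq.mp (UniqueFactorizationMonoid.prod_normalizedFactors hJu)] at h9
      rw [Ideal.map_span, Set.image_singleton] at h9
      rw [h9, hPcomap]
    -- count both sides of hEq at P
    have hspanrd : Ideal.span {rd} ≠ ⊥ := by simpa using hrd0
    have hspansd : Ideal.span {sd} ≠ ⊥ := by simpa using hsd0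
    have hspanr' : Ideal.span {algebraMap (𝓞 F) (𝓞 K) r} ≠ ⊥ := by simpa using hmapr0
    have hspans' : Ideal.span {algebraMap (𝓞 F) (𝓞 K) s} ≠ ⊥ := by simpa using hmaps0
    have hcount := congrArg
      (fun J => Multiset.count P (UniqueFactorizationMonoid.normalizedFactors J)) hEq
    simp only [UniqueFactorizationMonoid.normalizedFactors_mul hspanr' (pow_ne_zero m hspansd),
      UniqueFactorizationMonoid.normalizedFactors_mul (pow_ne_zero m hspanrd) hspans',
      UniqueFactorizationMonoid.normalizedFactors_pow, Multiset.count_add,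
      Multiset.count_nsmul] at hcount
    rw [htrans r hr0, htrans s hs0] at hcount
    refine ⟨(Multiset.count P (UniqueFactorizationMonoid.normalizedFactors (Ideal.span {rd})) : ℤ)
      - Multiset.count P (UniqueFactorizationMonoid.normalizedFactors (Ideal.span {sd})), ?_⟩
    have hcount' : ((Multiset.count p (UniqueFactorizationMonoid.normalizedFactors
        (Ideal.span {r})) : ℤ))
        + m * Multiset.count P (UniqueFactorizationMonoid.normalizedFactors (Ideal.span {sd}))
        = m * Multiset.count P (UniqueFactorizationMonoid.normalizedFactors (Ideal.span {rd}))
        + Multiset.count p (UniqueFactorizationMonoid.normalizedFactors (Ideal.span {s})) := by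
      exact_mod_cast hcount
    linear_combination hcount'
  obtain ⟨I, hI⟩ := exists_pow_eq_of_count_dvd' (F := F) m r s hr0 hs0 hdvd
  refine ⟨I, ?_⟩
  rw [← hrs]
  exact hI
end
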